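/- (Third-order moment condition of MELD, Theorem 1.) Let (Ω, F, P) be a probability space and α ∈ ℝ^k with α_h > 0 for all h and α_0 = Σ_h α_h. Let x : Ω → ℝ^k be a bounded measurable random vector whose moments up to order three satisfy the Dirichlet formulas: E[x_g] = α_g/α_0, E[x_g x_h] = (α_g α_h + δ_{gh} α_g)/(α_0(α_0+1)), and E[x_g x_h x_l] = (α_g α_h α_l + δ_{gh} α_g α_l + δ_{gl} α_g α_h + δ_{hl} α_h α_g + 2 δ_{gh} δ_{gl} α_g)/(α_0(α_0+1)(α_0+2)). Let u : Ω → ℝ^{d_j}, v : Ω → ℝ^{d_s}, w : Ω → ℝ^{d_t} be bounded measurable random vectors, mutually conditionally independent given σ(x), with E[u ∣ σ(x)] = Φ_j x, E[v ∣ σ(x)] = Φ_s x, E[w ∣ σ(x)] = Φ_t x almost surely. Define μ_j = (1/α_0) Φ_j α (similarly μ_s, μ_t), write φ_{jh} for the h-th column of Φ_j, and let λ^(3)_h = 2 α_h/(α_0(α_0+1)(α_0+2)). Then, entrywise for all a, b, c: E[u_a v_b w_c] − (α_0/(α_0+2)) ( E[u_a v_b] (μ_t)_c + (μ_j)_a E[v_b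 w_c] + E[u_a w_c] (μ_s)_b ) + (2 α_0^2/((α_0+1)(α_0+2))) (μ_j)_a (μ_s)_b (μ_t)_c − Σ_{h=1}^k λ^(3)_h (φ_{jh})_a (φ_{sh})_b (φ_{th})_c = 0. -/

import Mathlib

open MeasureTheory Filter

private lemma bdd_int {Ω : Type*} {m0 : MeasurableSpace Ω} {μ : Measure Ω} [IsFiniteMeasure μ]
    {f : Ω → ℝ} (hf : Measurable f) (C : ℝ) (h : ∀ ω, |f ω| ≤ C) : Integrable f μ :=
  ⟨hf.aestronglyMeasurable, HasFiniteIntegral.of_bounded (C := C)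
    (Filter.Eventually.of_forall fun ω => by simpa [Real.norm_eq_abs] using h ω)⟩

private lemma trunc_abs_le (C t : ℝ) (hC : 0 ≤ C) : |max (-C) (min C t)| ≤ C := by
  rw [abs_le]
  exact ⟨le_max_left _ _, max_le (by linarith) (min_le_left _ _)⟩

private lemma trunc_eq (C t : ℝ) (h : |t| ≤ C) : max (-C) (min C t) = t := by
  rw [abs_le] at h
  rw [min_eq_right h.2, max_eq_right h.1]

private lemma integral_expand3 {Ω : Type*} {m0 : MeasurableSpace Ω} (μ : Measure Ω)
    [IsProbabilityMeasure μ] {k : ℕ} (x : Ω → Fin k → ℝ) (hx : Measurable x) (Cx : ℝ)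
    (hCx0 : 0 ≤ Cx) (hCx : ∀ ω h, |x ω h| ≤ Cx) (A B C : Fin k → ℝ) :
    ∫ ω, (∑ g, A g * x ω g) * (∑ h, B h * x ω h) * (∑ l, C l * x ω l) ∂μ
      = ∑ g, ∑ h, ∑ l, A g * B h * C l * ∫ ω, x ω g * x ω h * x ω l ∂μ := by
  have hxm : ∀ g, Measurable fun ω => x ω g := fun g => (measurable_pi_apply g).comp hx
  have hint : ∀ g h l, Integrable (fun ω => x ω g * x ω h * x ω l) μ := by
    intro g h l
    refine bdd_int (((hxm g).mul (hxm h)).mul (hxm l)) (Cx * Cx * Cx) fun ω => ?_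
    rw [abs_mul, abs_mul]
    exact mul_le_mul (mul_le_mul (hCx ω g) (hCx ω h) (abs_nonneg _) hCx0)
      (hCx ω l) (abs_nonneg _) (by positivity)
  have hrw : (fun ω => (∑ g, A g * x ω g) * (∑ h, B h * x ω h) * (∑ l, C l * x ω l))
      = fun ω => ∑ g, ∑ h, ∑ l, A g * B h * C l * (x ω g * x ω h * x ω l) := by
    funext ω
    rw [Finset.sum_mul_sum, Finset.sum_mul]
    refine Finset.sum_congr rfl fun g _ => ?_
    rw [Finset.sum_mul]
    refine Finset.sum_congr rfl fun h _ => ?_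
    rw [Finset.mul_sum]
    exact Finset.sum_congr rfl fun l _ => by ring
  rw [hrw, integral_finset_sum _ (fun g _ => integrable_finset_sum _ fun h _ =>
    integrable_finset_sum _ fun l _ => (hint g h l).const_mul _)]
  refine Finset.sum_congr rfl fun g _ => ?_
  rw [integral_finset_sum _ (fun h _ => integrable_finset_sum _ fun l _ => (hint g h l).const_mul _)]
  refine Finset.sum_congr rfl fun h _ => ?_
  rw [integral_finset_sum _ (fun l _ => (hint g h l).const_mul _)]
  exact Finset.sum_congr rfl fun l _ => integral_const_mul _ _

private lemma integral_expand2 {Ω : Type*} {m0 : MeasurableSpace Ω} (μ : Measure Ω)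
    [IsProbabilityMeasure μ] {k : ℕ} (x : Ω → Fin k → ℝ) (hx : Measurable x) (Cx : ℝ)
    (hCx0 : 0 ≤ Cx) (hCx : ∀ ω h, |x ω h| ≤ Cx) (A B : Fin k → ℝ) :
    ∫ ω, (∑ g, A g * x ω g) * (∑ h, B h * x ω h) ∂μ
      = ∑ g, ∑ h, A g * B h * ∫ ω, x ω g * x ω h ∂μ := by
  have hxm : ∀ g, Measurable fun ω => x ω g := fun g => (measurable_pi_apply g).comp hx
  have hint : ∀ g h, Integrable (fun ω => x ω g * x ω h) μ := by
    intro g h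
    refine bdd_int ((hxm g).mul (hxm h)) (Cx * Cx) fun ω => ?_
    rw [abs_mul]
    exact mul_le_mul (hCx ω g) (hCx ω h) (abs_nonneg _) hCx0
  have hrw : (fun ω => (∑ g, A g * x ω g) * (∑ h, B h * x ω h))
      = fun ω => ∑ g, ∑ h, A g * B h * (x ω g * x ω h) := by
    funext ω
    rw [Finset.sum_mul_sum]
    exact Finset.sum_congr rfl fun g _ => Finset.sum_congr rfl fun h _ => by ring
  rw [hrw, integral_finset_sum _ (fun g _ => integrable_finset_sum _ fun h _ =>
    (hint g h).const_mul _)]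
  refine Finset.sum_congr rfl fun g _ => ?_
  rw [integral_finset_sum _ (fun h _ => (hint g h).const_mul _)]
  exact Finset.sum_congr rfl fun h _ => integral_const_mul _ _

private lemma sum3_combine {k : ℕ} (c1 c2 : ℝ) (f1 f2a f2b f2c f3 g : Fin k → Fin k → Fin k → ℝ)
    (h : ∀ i j l, f1 i j l - c1 * (f2a i j l + f2b i j l + f2c i j l) + c2 * f3 i j l = g i j l) :
    (∑ i, ∑ j, ∑ l, f1 i j l)
      - c1 * ((∑ i, ∑ j, ∑ l, f2a i j l) + (∑ i, ∑ j, ∑ l, f2b i j l) + (∑ i, ∑ j, ∑ l, f2c i j l))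
      + c2 * (∑ i, ∑ j, ∑ l, f3 i j l) = ∑ i, ∑ j, ∑ l, g i j l := by
  simp only [Finset.mul_sum, ← Finset.sum_add_distrib, ← Finset.sum_sub_distrib]
  exact Finset.sum_congr rfl fun i _ => Finset.sum_congr rfl fun j _ =>
    Finset.sum_congr rfl fun l _ => h i j l

private lemma sum2_mul_sum1 {k : ℕ} (F : Fin k → Fin k → ℝ) (c : ℝ) (G : Fin k → ℝ) :
    (∑ g, ∑ h, F g h) * (c * ∑ l, G l) = ∑ g, ∑ h, ∑ l, F g h * (c * G l) := by
  rw [Finset.sum_mul]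
  refine Finset.sum_congr rfl fun g _ => ?_
  rw [Finset.sum_mul]
  refine Finset.sum_congr rfl fun h _ => ?_
  rw [Finset.mul_sum, Finset.mul_sum]

private lemma sum1_mul_sum2 {k : ℕ} (c : ℝ) (G : Fin k → ℝ) (F : Fin k → Fin k → ℝ) :
    (c * ∑ g, G g) * (∑ h, ∑ l, F h l) = ∑ g, ∑ h, ∑ l, (c * G g) * F h l := by
  rw [show c * ∑ g, G g = ∑ g, c * G g from Finset.mul_sum _ _ _, Finset.sum_mul]
  refine Finset.sum_congr rfl fun g _ => ?_
  rw [Finset.mul_sum]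
  exact Finset.sum_congr rfl fun h _ => Finset.mul_sum _ _ _

private lemma sum2_mul_sum1' {k : ℕ} (F : Fin k → Fin k → ℝ) (c : ℝ) (G : Fin k → ℝ) :
    (∑ g, ∑ l, F g l) * (c * ∑ h, G h) = ∑ g, ∑ h, ∑ l, F g l * (c * G h) := by
  rw [Finset.sum_mul]
  refine Finset.sum_congr rfl fun g _ => ?_
  rw [show c * ∑ h, G h = ∑ h, c * G h from Finset.mul_sum _ _ _, Finset.sum_mul_sum,
    Finset.sum_comm]

private lemma sum1_cube {k : ℕ} (c : ℝ) (A B C : Fin k → ℝ) :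
    (c * ∑ g, A g) * (c * ∑ h, B h) * (c * ∑ l, C l)
      = ∑ g, ∑ h, ∑ l, (c * A g) * (c * B h) * (c * C l) := by
  rw [show c * ∑ g, A g = ∑ g, c * A g from Finset.mul_sum _ _ _,
    show c * ∑ h, B h = ∑ h, c * B h from Finset.mul_sum _ _ _,
    show c * ∑ l, C l = ∑ l, c * C l from Finset.mul_sum _ _ _,
    Finset.sum_mul_sum, Finset.sum_mul]
  refine Finset.sum_congr rfl fun g _ => ?_
  rw [Finset.sum_mul]
  refine Finset.sum_congr rfl fun h _ => ?_
  rw [Finset.mul_sum]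

private lemma diag_sum {k : ℕ} (F : Fin k → Fin k → Fin k → ℝ) :
    (∑ g, ∑ h, ∑ l, if g = l then (if g = h then F g h l else 0) else 0) = ∑ g, F g g g := by
  refine Finset.sum_congr rfl fun g _ => ?_
  simp [Finset.sum_ite_eq]

set_option maxHeartbeats 2000000 in
/-- Third-order moment condition of MELD (Theorem 1), entrywise. -/
theorem meld_third_moment_condition
    {Ω : Type*} [MeasurableSpace Ω] (μ : Measure Ω) [IsProbabilityMeasure μ]
    (k dj ds dt : ℕ) (α : Fin k → ℝ) (hα : ∀ h, 0 < α h)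
    (x : Ω → Fin k → ℝ)
    (u : Ω → Fin dj → ℝ) (v : Ω → Fin ds → ℝ) (w : Ω → Fin dt → ℝ)
    (hx : Measurable x) (hu : Measurable u) (hv : Measurable v) (hw : Measurable w)
    (hxb : ∃ C, ∀ ω h, |x ω h| ≤ C)
    (hub : ∃ C, ∀ ω a, |u ω a| ≤ C)
    (hvb : ∃ C, ∀ ω b, |v ω b| ≤ C)
    (hwb : ∃ C, ∀ ω c, |w ω c| ≤ C)
    -- Dirichlet moment formulas for `x` up to order three
    (hx1 : ∀ g, ∫ ω, x ω g ∂μ = α g / (∑ i, α i))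
    (hx2 : ∀ g h, ∫ ω, x ω g * x ω h ∂μ =
      (α g * α h + (if g = h then α g else 0)) / ((∑ i, α i) * ((∑ i, α i) + 1)))
    (hx3 : ∀ g h l, ∫ ω, x ω g * x ω h * x ω l ∂μ =
      (α g * α h * α l + (if g = h then α g * α l else 0) +
          (if g = l then α g * α h else 0) + (if h = l then α h * α g else 0) +
          (if g = h then 1 else 0) * (if g = l then 1 else 0) * (2 * α g)) /
        ((∑ i, α i) * ((∑ i, α i) + 1) * ((∑ i, α i) + 2)))
    (Φj : Matrix (Fin dj) (Fin k) ℝ) (Φs : Matrix (Fin ds) (Fin k) ℝ)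
    (Φt : Matrix (Fin dt) (Fin k) ℝ)
    -- mutual conditional independence of `u`, `v`, `w` given `σ(x)`
    (hCI : ∀ (f : (Fin dj → ℝ) → ℝ) (g : (Fin ds → ℝ) → ℝ) (e : (Fin dt → ℝ) → ℝ),
      Measurable f → Measurable g → Measurable e →
      (∃ C, ∀ z, |f z| ≤ C) → (∃ C, ∀ z, |g z| ≤ C) → (∃ C, ∀ z, |e z| ≤ C) →
      μ[fun ω => f (u ω) * g (v ω) * e (w ω) | (MeasurableSpace.comap x inferInstance)]
        =ᵐ[μ] fun ω =>
          ((μ[fun ω' => f (u ω') | (MeasurableSpace.comap x inferInstance)]) ω) *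
          ((μ[fun ω' => g (v ω') | (MeasurableSpace.comap x inferInstance)]) ω) *
          ((μ[fun ω' => e (w ω') | (MeasurableSpace.comap x inferInstance)]) ω))
    -- conditional means: `E[u ∣ σ(x)] = Φ_j x`, etc., a.s.
    (hu_mean : ∀ a, μ[fun ω => u ω a | (MeasurableSpace.comap x inferInstance)]
        =ᵐ[μ] fun ω => ∑ h, Φj a h * x ω h)
    (hv_mean : ∀ b, μ[fun ω => v ω b | (MeasurableSpace.comap x inferInstance)]
        =ᵐ[μ] fun ω => ∑ h, Φs b h * x ω h)
    (hw_mean : ∀ c, μ[fun ω => w ω c | (MeasurableSpace.comap x inferInstance)]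
        =ᵐ[μ] fun ω => ∑ h, Φt c h * x ω h) :
    ∀ a b c,
      (∫ ω, u ω a * v ω b * w ω c ∂μ) -
        ((∑ i, α i) / ((∑ i, α i) + 2)) *
          ((∫ ω, u ω a * v ω b ∂μ) * (((1 : ℝ) / (∑ i, α i)) * ∑ h, Φt c h * α h) +
            (((1 : ℝ) / (∑ i, α i)) * ∑ h, Φj a h * α h) * (∫ ω, v ω b * w ω c ∂μ) +
            (∫ ω, u ω a * w ω c ∂μ) * (((1 : ℝ) / (∑ i, α i)) * ∑ h, Φs b h * α h)) +
        (2 * (∑ i, α i) ^ 2 / (((∑ i, α i) + 1) * ((∑ i, α i) + 2))) *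
          ((((1 : ℝ) / (∑ i, α i)) * ∑ h, Φj a h * α h) *
            (((1 : ℝ) / (∑ i, α i)) * ∑ h, Φs b h * α h) *
            (((1 : ℝ) / (∑ i, α i)) * ∑ h, Φt c h * α h)) -
        (∑ h, (2 * α h / ((∑ i, α i) * ((∑ i, α i) + 1) * ((∑ i, α i) + 2))) *
          (Φj a h * Φs b h * Φt c h)) = 0 := by
  intro a b c
  obtain ⟨Cu₀, hCu₀⟩ := hub
  obtain ⟨Cv₀, hCv₀⟩ := hvb
  obtain ⟨Cw₀, hCw₀⟩ := hwb
  obtain ⟨Cx₀, hCx₀⟩ := hxb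
  set Cu := max Cu₀ 0 with hCudef
  set Cv := max Cv₀ 0 with hCvdef
  set Cw := max Cw₀ 0 with hCwdef
  set Cx := max Cx₀ 0 with hCxdef
  have hCu : ∀ ω, |u ω a| ≤ Cu := fun ω => le_trans (hCu₀ ω a) (le_max_left _ _)
  have hCv : ∀ ω, |v ω b| ≤ Cv := fun ω => le_trans (hCv₀ ω b) (le_max_left _ _)
  have hCw : ∀ ω, |w ω c| ≤ Cw := fun ω => le_trans (hCw₀ ω c) (le_max_left _ _)
  have hCx : ∀ ω h, |x ω h| ≤ Cx := fun ω h => le_trans (hCx₀ ω h) (le_max_left _ _)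
  have hCu0 : (0:ℝ) ≤ Cu := le_max_right _ _
  have hCv0 : (0:ℝ) ≤ Cv := le_max_right _ _
  have hCw0 : (0:ℝ) ≤ Cw := le_max_right _ _
  have hCx0 : (0:ℝ) ≤ Cx := le_max_right _ _
  have hm'le : MeasurableSpace.comap x inferInstance ≤ ‹MeasurableSpace Ω› := hx.comap_le
  have hua : Measurable fun ω => u ω a := (measurable_pi_apply a).comp hu
  have hvb' : Measurable fun ω => v ω b := (measurable_pi_apply b).comp hv
  have hwc : Measurable fun ω => w ω c := (measurable_pi_apply c).comp hw
  -- truncation functions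
  have hfm : Measurable fun z : Fin dj → ℝ => max (-Cu) (min Cu (z a)) :=
    measurable_const.max (measurable_const.min (measurable_pi_apply a))
  have hgm : Measurable fun z : Fin ds → ℝ => max (-Cv) (min Cv (z b)) :=
    measurable_const.max (measurable_const.min (measurable_pi_apply b))
  have hem : Measurable fun z : Fin dt → ℝ => max (-Cw) (min Cw (z c)) :=
    measurable_const.max (measurable_const.min (measurable_pi_apply c))
  have hfb : ∃ C, ∀ z : Fin dj → ℝ, |max (-Cu) (min Cu (z a))| ≤ C :=
    ⟨Cu, fun z => trunc_abs_le Cu (z a) hCu0⟩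
  have hgb : ∃ C, ∀ z : Fin ds → ℝ, |max (-Cv) (min Cv (z b))| ≤ C :=
    ⟨Cv, fun z => trunc_abs_le Cv (z b) hCv0⟩
  have heb : ∃ C, ∀ z : Fin dt → ℝ, |max (-Cw) (min Cw (z c))| ≤ C :=
    ⟨Cw, fun z => trunc_abs_le Cw (z c) hCw0⟩
  have honem : ∀ {d : ℕ}, Measurable fun _ : Fin d → ℝ => (1:ℝ) := fun {d} => measurable_const
  have honeb : ∀ {d : ℕ}, ∃ C, ∀ z : Fin d → ℝ, |(1:ℝ)| ≤ C := fun {d} => ⟨1, fun _ => by norm_num⟩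
  have htru : ∀ ω, max (-Cu) (min Cu (u ω a)) = u ω a := fun ω => trunc_eq _ _ (hCu ω)
  have htrv : ∀ ω, max (-Cv) (min Cv (v ω b)) = v ω b := fun ω => trunc_eq _ _ (hCv ω)
  have htrw : ∀ ω, max (-Cw) (min Cw (w ω c)) = w ω c := fun ω => trunc_eq _ _ (hCw ω)
  have hce1 : μ[fun _ => (1:ℝ) | (MeasurableSpace.comap x inferInstance)] = fun _ => (1:ℝ) :=
    condExp_const hm'le 1
  -- conditional independence instances
  have hCI3 := hCI _ _ _ hfm hgm hem hfb hgb heb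
  have hCIuv := hCI _ _ (fun _ => 1) hfm hgm honem hfb hgb honeb
  have hCIvw := hCI (fun _ => 1) _ _ honem hgm hem honeb hgb heb
  have hCIuw := hCI _ (fun _ => 1) _ hfm honem hem hfb honeb heb
  simp only [htru, htrv, htrw, mul_one, one_mul, hce1] at hCI3 hCIuv hCIvw hCIuw
  -- integrability
  have hint_uvw : Integrable (fun ω => u ω a * v ω b * w ω c) μ := by
    refine bdd_int ((hua.mul hvb').mul hwc) (Cu * Cv * Cw) fun ω => ?_
    rw [abs_mul, abs_mul]
    exact mul_le_mul (mul_le_mul (hCu ω) (hCv ω) (abs_nonneg _) hCu0) (hCw ω)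
      (abs_nonneg _) (by positivity)
  have hint_uv : Integrable (fun ω => u ω a * v ω b) μ := by
    refine bdd_int (hua.mul hvb') (Cu * Cv) fun ω => ?_
    rw [abs_mul]
    exact mul_le_mul (hCu ω) (hCv ω) (abs_nonneg _) hCu0
  have hint_vw : Integrable (fun ω => v ω b * w ω c) μ := by
    refine bdd_int (hvb'.mul hwc) (Cv * Cw) fun ω => ?_
    rw [abs_mul]
    exact mul_le_mul (hCv ω) (hCw ω) (abs_nonneg _) hCv0
  have hint_uw : Integrable (fun ω => u ω a * w ω c) μ := by
    refine bdd_int (hua.mul hwc) (Cu * Cw) fun ω => ?_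
    rw [abs_mul]
    exact mul_le_mul (hCu ω) (hCw ω) (abs_nonneg _) hCu0
  -- reduce integrals to moments of x
  have I3 : ∫ ω, u ω a * v ω b * w ω c ∂μ
      = ∑ g, ∑ h, ∑ l, Φj a g * Φs b h * Φt c l * ∫ ω, x ω g * x ω h * x ω l ∂μ := by
    have h3 : μ[fun ω => u ω a * v ω b * w ω c | (MeasurableSpace.comap x inferInstance)]
        =ᵐ[μ] fun ω => (∑ g, Φj a g * x ω g) * (∑ h, Φs b h * x ω h) * (∑ l, Φt c l * x ω l) := by
      filter_upwards [hCI3, hu_mean a, hv_mean b, hw_mean c] with ω h1 h2 h3 h4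
      rw [h1, h2, h3, h4]
    calc ∫ ω, u ω a * v ω b * w ω c ∂μ
        = ∫ ω, (μ[fun ω => u ω a * v ω b * w ω c |
            (MeasurableSpace.comap x inferInstance)]) ω ∂μ :=
          (integral_condExp hm'le).symm
      _ = ∫ ω, (∑ g, Φj a g * x ω g) * (∑ h, Φs b h * x ω h) * (∑ l, Φt c l * x ω l) ∂μ :=
          integral_congr_ae h3
      _ = _ := integral_expand3 μ x hx Cx hCx0 hCx _ _ _
  have Iuv : ∫ ω, u ω a * v ω b ∂μ
      = ∑ g, ∑ h, Φj a g * Φs b h * ∫ ω, x ω g * x ω h ∂μ := by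
    have h2' : μ[fun ω => u ω a * v ω b | (MeasurableSpace.comap x inferInstance)]
        =ᵐ[μ] fun ω => (∑ g, Φj a g * x ω g) * (∑ h, Φs b h * x ω h) := by
      filter_upwards [hCIuv, hu_mean a, hv_mean b] with ω h1 h2 h3
      rw [h1, h2, h3]
    calc ∫ ω, u ω a * v ω b ∂μ
        = ∫ ω, (μ[fun ω => u ω a * v ω b | (MeasurableSpace.comap x inferInstance)]) ω ∂μ :=
          (integral_condExp hm'le).symm
      _ = ∫ ω, (∑ g, Φj a g * x ω g) * (∑ h, Φs b h * x ω h) ∂μ := integral_congr_ae h2'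
      _ = _ := integral_expand2 μ x hx Cx hCx0 hCx _ _
  have Ivw : ∫ ω, v ω b * w ω c ∂μ
      = ∑ g, ∑ h, Φs b g * Φt c h * ∫ ω, x ω g * x ω h ∂μ := by
    have h2' : μ[fun ω => v ω b * w ω c | (MeasurableSpace.comap x inferInstance)]
        =ᵐ[μ] fun ω => (∑ g, Φs b g * x ω g) * (∑ h, Φt c h * x ω h) := by
      filter_upwards [hCIvw, hv_mean b, hw_mean c] with ω h1 h2 h3
      rw [h1, h2, h3]
    calc ∫ ω, v ω b * w ω c ∂μ
        = ∫ ω, (μ[fun ω => v ω b * w ω c | (MeasurableSpace.comap x inferInstance)]) ω ∂μ :=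
          (integral_condExp hm'le).symm
      _ = ∫ ω, (∑ g, Φs b g * x ω g) * (∑ h, Φt c h * x ω h) ∂μ := integral_congr_ae h2'
      _ = _ := integral_expand2 μ x hx Cx hCx0 hCx _ _
  have Iuw : ∫ ω, u ω a * w ω c ∂μ
      = ∑ g, ∑ h, Φj a g * Φt c h * ∫ ω, x ω g * x ω h ∂μ := by
    have h2' : μ[fun ω => u ω a * w ω c | (MeasurableSpace.comap x inferInstance)]
        =ᵐ[μ] fun ω => (∑ g, Φj a g * x ω g) * (∑ h, Φt c h * x ω h) := by
      filter_upwards [hCIuw, hu_mean a, hw_mean c] with ω h1 h2 h3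
      rw [h1, h2, h3]
    calc ∫ ω, u ω a * w ω c ∂μ
        = ∫ ω, (μ[fun ω => u ω a * w ω c | (MeasurableSpace.comap x inferInstance)]) ω ∂μ :=
          (integral_condExp hm'le).symm
      _ = ∫ ω, (∑ g, Φj a g * x ω g) * (∑ h, Φt c h * x ω h) ∂μ := integral_congr_ae h2'
      _ = _ := integral_expand2 μ x hx Cx hCx0 hCx _ _
  rw [I3, Iuv, Ivw, Iuw, sub_eq_zero, sum2_mul_sum1, sum1_mul_sum2, sum2_mul_sum1', sum1_cube,
    ← diag_sum (fun g h l => (2 * α g / ((∑ i, α i) * ((∑ i, α i) + 1) * ((∑ i, α i) + 2))) *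
      (Φj a g * Φs b h * Φt c l))]
  refine sum3_combine _ _ _ _ _ _ _ _ fun g h l => ?_
  simp only [hx2, hx3]
  have hS : (0:ℝ) < ∑ i, α i := Finset.sum_pos (fun i _ => hα i) ⟨g, Finset.mem_univ g⟩
  have hS0 : (∑ i, α i) ≠ 0 := ne_of_gt hS
  have hS1 : (∑ i, α i) + 1 ≠ 0 := ne_of_gt (by linarith)
  have hS2 : (∑ i, α i) + 2 ≠ 0 := ne_of_gt (by linarith)
  rcases eq_or_ne g h with rfl | hgh
  · rcases eq_or_ne g l with rfl | hgl
    · simp only [if_pos rfl, if_true]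
      field_simp
      ring
    · simp only [if_pos rfl, if_true, if_neg hgl]
      field_simp
      ring
  · rcases eq_or_ne g l with rfl | hgl
    · simp only [if_pos rfl, if_true, if_neg hgh, if_neg (Ne.symm hgh)]
      field_simp
      ring
    · rcases eq_or_ne h l with rfl | hhl
      · simp only [if_pos rfl, if_true, if_neg hgh, if_neg hgl]
        field_simp
        ring
      · simp only [if_neg hgh, if_neg hgl, if_neg hhl]
        field_simp
        ring
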